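/- For integers p, r, ℓ with 1 < p ≤ r+1 ≤ ℓ and any complex numbers x_1, …, x_ℓ, the following identity holds: 𝔉(x_1,…,x_r)·𝔉(x_p,…,x_ℓ) − 𝔉(x_1,…,x_ℓ)·𝔉(x_p,…,x_r) = (∏_{j=p-1}^{r} x_j x_{j+1}) · 𝔉(x_1,…,x_{p-2}) · 𝔉(x_{r+2},…,x_ℓ). -/
import Mathlib


open Classical

noncomputable def Fterm (x : ℕ → ℂ) (m : ℕ) (k : Fin m → ℕ) : ℂ :=
  if ∀ i : Fin m, ∀ h : (i : ℕ) + 1 < m, k i + 2 ≤ k ⟨(i : ℕ) + 1, h⟩ then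
    ∏ i : Fin m, x (k i) * x (k i + 1)
  else 0

/-- The function 𝔉 applied to the sequence (x 0, x 1, x 2, …), i.e. x is 0-based:
`x k` represents `x_{k+1}` of the paper. -/
noncomputable def FF (x : ℕ → ℂ) : ℂ :=
  1 + ∑' m : ℕ, (-1 : ℂ) ^ (m + 1) * (∑' k : Fin (m + 1) → ℕ, Fterm x (m + 1) k)

/-- 𝔉 of the finite tuple (x 0, …, x (n-1)), by extending with zeros. -/
noncomputable def FFfin (n : ℕ) (x : ℕ → ℂ) : ℂ :=
  FF fun k => if k < n then x k else 0

def Cond {m : ℕ} (k : Fin m → ℕ) : Prop :=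
  ∀ i : Fin m, ∀ h : (i : ℕ) + 1 < m, k i + 2 ≤ k ⟨(i : ℕ) + 1, h⟩

lemma Fterm_pos {x : ℕ → ℂ} {m : ℕ} {k : Fin m → ℕ} (h : Cond k) :
    Fterm x m k = ∏ i : Fin m, x (k i) * x (k i + 1) := by
  exact if_pos h

lemma Fterm_neg {x : ℕ → ℂ} {m : ℕ} {k : Fin m → ℕ} (h : ¬ Cond k) :
    Fterm x m k = 0 := by
  exact if_neg h

lemma Cond.lower {m : ℕ} {k : Fin m → ℕ} (hk : Cond k) :
    ∀ (j : ℕ) (h : j < m), 2*j ≤ k ⟨j, h⟩ := by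
  intro j
  induction j with
  | zero => intro h; omega
  | succ j ih =>
    intro h
    have h1 : j < m := by omega
    have h2 : k ⟨j, h1⟩ + 2 ≤ k ⟨j+1, h⟩ := hk ⟨j, h1⟩ h
    have h3 := ih h1
    omega

lemma Cond.lt {m : ℕ} {k : Fin m → ℕ} (hk : Cond k) :
    ∀ (j : ℕ) (h : j < m) (i : Fin m), (i : ℕ) < j → k i + 2 ≤ k ⟨j, h⟩ := by
  intro j
  induction j with
  | zero => intro h i hi; omega
  | succ j ihj =>
    intro h i hi
    rcases Nat.lt_or_ge (i : ℕ) j with hij | hij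
    · have h1 : j < m := by omega
      have h2 := ihj h1 i hij
      have h3 : k ⟨j, h1⟩ + 2 ≤ k ⟨j+1, h⟩ := hk ⟨j, h1⟩ h
      omega
    · have hij' : (i : ℕ) = j := by omega
      have h2 := hk i (show (i : ℕ) + 1 < m by omega)
      have h3 : (⟨(i : ℕ) + 1, show (i:ℕ)+1 < m by omega⟩ : Fin m) = ⟨j+1, h⟩ :=
        Fin.ext (by simp [hij'])
      rw [h3] at h2
      exact h2

def tr (n : ℕ) (x : ℕ → ℂ) (k : ℕ) : ℂ := if k < n then x k else 0

lemma FFfin_def (n : ℕ) (x : ℕ → ℂ) : FFfin n x = FF (tr n x) := rfl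

lemma tr_lt {n : ℕ} {x : ℕ → ℂ} {k : ℕ} (h : k < n) : tr n x k = x k := if_pos h
lemma tr_ge {n : ℕ} {x : ℕ → ℂ} {k : ℕ} (h : n ≤ k) : tr n x k = 0 := if_neg (by omega)

noncomputable def AA (y : ℕ → ℂ) (m : ℕ) : ℂ := ∑' k : Fin m → ℕ, Fterm y m k

lemma FF_eq (y : ℕ → ℂ) : FF y = 1 + ∑' m : ℕ, (-1 : ℂ) ^ (m + 1) * AA y (m+1) := rfl

lemma Fterm_index_lt {y : ℕ → ℂ} {N : ℕ} (hy : ∀ j, N ≤ j → y j = 0) {m : ℕ}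
    {k : Fin m → ℕ} (h : Fterm y m k ≠ 0) (i : Fin m) : k i + 1 < N := by
  by_cases hc : Cond k
  · rw [Fterm_pos hc] at h
    have h2 := Finset.prod_ne_zero_iff.mp h i (Finset.mem_univ i)
    have h3 : y (k i + 1) ≠ 0 := fun hz => h2 (by rw [hz, mul_zero])
    by_contra hN
    exact h3 (hy _ (by omega))
  · exact absurd (Fterm_neg hc) h

lemma summable_Fterm {y : ℕ → ℂ} {N : ℕ} (hy : ∀ j, N ≤ j → y j = 0) (m : ℕ) :
    Summable (Fterm y m) := by
  apply summable_of_ne_finset_zero (s := Fintype.piFinset fun _ : Fin m => Finset.range N)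
  intro k hk
  by_contra h
  exact hk (Fintype.mem_piFinset.mpr fun i => Finset.mem_range.mpr
    (by have := Fterm_index_lt hy h i; omega))

lemma AA_zero_eq_one (y : ℕ → ℂ) : AA y 0 = 1 := by
  have h1 : ∀ k : Fin 0 → ℕ, Fterm y 0 k = 1 := by
    intro k
    rw [Fterm_pos (fun i => i.elim0)]
    simp
  rw [AA, tsum_congr h1]
  rw [tsum_eq_single (fun i : Fin 0 => (i.elim0 : ℕ))]
  intro b hb
  exact absurd (funext fun i => i.elim0) hb

lemma AA_eq_zero {y : ℕ → ℂ} {N : ℕ} (hy : ∀ j, N ≤ j → y j = 0) (m : ℕ)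
    (h : N ≤ 2*m) : AA y (m+1) = 0 := by
  rw [AA]
  have h1 : ∀ k : Fin (m+1) → ℕ, Fterm y (m+1) k = 0 := by
    intro k
    by_contra hne
    have hc : Cond k := by
      by_contra hc; exact hne (Fterm_neg hc)
    have h2 := hc.lower m (by omega)
    have h3 := Fterm_index_lt hy hne ⟨m, by omega⟩
    omega
  rw [tsum_congr h1, tsum_zero]

lemma summable_outer {y : ℕ → ℂ} {N : ℕ} (hy : ∀ j, N ≤ j → y j = 0) :
    Summable (fun m : ℕ => (-1 : ℂ) ^ (m + 1) * AA y (m+1)) := by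
  apply summable_of_ne_finset_zero (s := Finset.range N)
  intro m hm
  rw [AA_eq_zero hy m (by simp at hm; omega), mul_zero]

lemma Fterm_split (n : ℕ) (x : ℕ → ℂ) (m : ℕ) (k : Fin (m+1) → ℕ) :
    Fterm (tr (n+2) x) (m+1) k
      = Fterm (tr (n+1) x) (m+1) k
        + (if k (Fin.last m) = n then
            x n * x (n+1) * Fterm (tr n x) m (Fin.init k) else 0) := by
  by_cases hlast : k (Fin.last m) = n
  · rw [if_pos hlast]
    have h1 : Fterm (tr (n+1) x) (m+1) k = 0 := by
      by_cases hc : Cond k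
      · rw [Fterm_pos hc]
        apply Finset.prod_eq_zero (Finset.mem_univ (Fin.last m))
        rw [hlast, tr_ge (show n+1 ≤ n+1 from le_rfl), mul_zero]
      · exact Fterm_neg hc
    rw [h1, zero_add]
    by_cases hc : Cond k
    · have hcinit : Cond (Fin.init k) := by
        intro i hi
        exact hc i.castSucc (by rw [Fin.coe_castSucc]; omega)
      rw [Fterm_pos hc, Fterm_pos hcinit, Fin.prod_univ_castSucc]
      have hbound : ∀ i : Fin m, k i.castSucc + 2 ≤ n := by
        intro i
        have h2 := hc.lt m (by omega) i.castSucc (by rw [Fin.coe_castSucc]; exact i.isLt)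
        have e : (⟨m, by omega⟩ : Fin (m+1)) = Fin.last m := rfl
        rw [e, hlast] at h2
        exact h2
      have e2 : tr (n+2) x (k (Fin.last m)) * tr (n+2) x (k (Fin.last m) + 1)
          = x n * x (n+1) := by
        rw [hlast, tr_lt (show n < n+2 by omega), tr_lt (show n+1 < n+2 by omega)]
      rw [e2]
      have e3 : ∏ i : Fin m, tr (n+2) x (k i.castSucc) * tr (n+2) x (k i.castSucc + 1)
          = ∏ i : Fin m, tr n x (Fin.init k i) * tr n x (Fin.init k i + 1) := by
        apply Finset.prod_congr rfl
        intro i _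
        have hb := hbound i
        show tr (n+2) x (k i.castSucc) * tr (n+2) x (k i.castSucc + 1)
          = tr n x (k i.castSucc) * tr n x (k i.castSucc + 1)
        rw [tr_lt (show k i.castSucc < n+2 by omega), tr_lt (show k i.castSucc + 1 < n+2 by omega),
          tr_lt (show k i.castSucc < n by omega), tr_lt (show k i.castSucc + 1 < n by omega)]
      rw [e3]; ring
    · rw [Fterm_neg hc]
      by_cases hcinit : Cond (Fin.init k)
      · rw [Fterm_pos hcinit]
        simp only [Cond] at hc
        push_neg at hc
        obtain ⟨i, hi, hlt⟩ := hc
        rcases Nat.lt_or_ge ((i : ℕ) + 1) m with him | him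
        · exfalso
          have h2 : k i + 2 ≤ k ⟨(i:ℕ)+1, hi⟩ := hcinit ⟨(i : ℕ), by omega⟩ him
          omega
        · have him' : (i : ℕ) + 1 = m := by omega
          have e4 : (⟨(i:ℕ)+1, hi⟩ : Fin (m+1)) = Fin.last m := Fin.ext (by simp [him'])
          rw [e4, hlast] at hlt
          have him0 : (i:ℕ) < m := by omega
          have hfac : tr n x (Fin.init k ⟨(i:ℕ), him0⟩)
              * tr n x (Fin.init k ⟨(i:ℕ), him0⟩ + 1) = 0 := by
            have e5 : Fin.init k ⟨(i:ℕ), him0⟩ = k i := rfl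
            rw [e5, tr_ge (show n ≤ k i + 1 by omega), mul_zero]
          rw [Finset.prod_eq_zero (Finset.mem_univ ⟨(i:ℕ), him0⟩) hfac, mul_zero]
      · rw [Fterm_neg hcinit, mul_zero]
  · rw [if_neg hlast, add_zero]
    by_cases hc : Cond k
    · rcases Nat.lt_or_ge (k (Fin.last m)) n with hlt | hge
      · rw [Fterm_pos hc, Fterm_pos hc]
        apply Finset.prod_congr rfl
        intro i _
        have hb : k i + 1 ≤ k (Fin.last m) + 1 := by
          rcases eq_or_lt_of_le (Fin.le_last i) with he | hlt2
          · rw [he]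
          · have h2 := hc.lt m (by omega) i (by simpa [Fin.lt_def] using hlt2)
            have e : (⟨m, by omega⟩ : Fin (m+1)) = Fin.last m := rfl
            rw [e] at h2
            omega
        rw [tr_lt (show k i < n+2 by omega), tr_lt (show k i + 1 < n+2 by omega),
          tr_lt (show k i < n+1 by omega), tr_lt (show k i + 1 < n+1 by omega)]
      · have hA : ∏ i : Fin (m+1), tr (n+2) x (k i) * tr (n+2) x (k i + 1) = 0 :=
          Finset.prod_eq_zero (Finset.mem_univ (Fin.last m))
            (by rw [tr_ge (show n+2 ≤ k (Fin.last m) + 1 by omega), mul_zero])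
        have hB : ∏ i : Fin (m+1), tr (n+1) x (k i) * tr (n+1) x (k i + 1) = 0 :=
          Finset.prod_eq_zero (Finset.mem_univ (Fin.last m))
            (by rw [tr_ge (show n+1 ≤ k (Fin.last m) by omega), zero_mul])
        rw [Fterm_pos hc, Fterm_pos hc, hA, hB]
    · rw [Fterm_neg hc, Fterm_neg hc]


noncomputable def G : ℕ → (ℕ → ℂ) → ℂ
  | 0, _ => 1
  | 1, _ => 1
  | n+2, x => G (n+1) x - x n * x (n+1) * G n x

lemma G_zero (x : ℕ → ℂ) : G 0 x = 1 := rfl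
lemma G_one (x : ℕ → ℂ) : G 1 x = 1 := rfl
lemma G_rec (n : ℕ) (x : ℕ → ℂ) : G (n+2) x = G (n+1) x - x n * x (n+1) * G n x := rfl

lemma Hlem (b : ℕ) (x : ℕ → ℂ) : ∀ d,
    G (b+1+d) x * G (d+1) (fun k => x (k+(b+1))) - G (b+1+d+1) x * G d (fun k => x (k+(b+1)))
      = (∏ j ∈ Finset.range (d+1), x (b+j) * x (b+j+1)) * G b x := by
  intro d
  induction d with
  | zero =>
    rw [show b+1+0+1 = b+2 by omega, show b+1+0 = b+1 by omega]
    rw [G_rec, G_one, G_zero]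
    rw [Finset.prod_range_one]
    ring
  | succ d ih =>
    rw [show b+1+(d+1)+1 = (b+1+d)+2 by omega, show b+1+(d+1) = (b+1+d)+1 by omega,
      show d+1+1 = d+2 from rfl]
    rw [G_rec (b+1+d) x, G_rec d (fun k => x (k+(b+1))), Finset.prod_range_succ]
    rw [show b+1+d+1 = b+d+2 by omega, show b+(d+1)+1 = b+d+2 by omega,
      show (d:ℕ)+1+(b+1) = b+d+2 by omega, show b+1+d = b+d+1 by omega,
      show b+(d+1) = b+d+1 by omega, show (d:ℕ)+(b+1) = b+d+1 by omega]
    rw [show b+1+d+1 = b+d+2 by omega, show b+1+d = b+d+1 by omega] at ih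
    linear_combination (x (b+d+1) * x (b+d+2)) * ih

lemma Gid (e : ℕ) : ∀ (b d : ℕ) (x : ℕ → ℂ),
    G (b+1+d) x * G (d+1+e) (fun k => x (k+(b+1))) - G (b+1+d+1+e) x * G d (fun k => x (k+(b+1)))
      = (∏ j ∈ Finset.range (d+1), x (b+j) * x (b+j+1)) * G b x
          * G e (fun k => x (k+(b+1+d)+1)) := by
  induction e using Nat.strong_induction_on with
  | _ e ih =>
    match e with
    | 0 =>
      intro b d x
      rw [G_zero, Nat.add_zero, Nat.add_zero, mul_one]
      exact Hlem b x d
    | 1 =>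
      intro b d x
      rw [G_one, mul_one]
      rw [show d+1+1 = d+2 from rfl, show b+1+d+1+1 = (b+1+d)+2 by omega]
      rw [G_rec (b+1+d) x, G_rec d (fun k => x (k+(b+1)))]
      rw [show b+1+d+1 = b+d+2 by omega, show (d:ℕ)+1+(b+1) = b+d+2 by omega,
        show b+1+d = b+d+1 by omega, show (d:ℕ)+(b+1) = b+d+1 by omega]
      have h := Hlem b x d
      rw [show b+1+d+1 = b+d+2 by omega, show b+1+d = b+d+1 by omega] at h
      linear_combination h
    | (e+2) =>
      intro b d x
      have ih1 := ih (e+1) (by omega) b d x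
      have ih0 := ih e (by omega) b d x
      rw [show d+1+(e+2) = (d+1+e)+2 by omega, show b+1+d+1+(e+2) = (b+1+d+1+e)+2 by omega]
      rw [G_rec (d+1+e) (fun k => x (k+(b+1))), G_rec (b+1+d+1+e) x, G_rec e (fun k => x (k+(b+1+d)+1))]
      rw [show d+1+(e+1) = d+1+e+1 by omega, show b+1+d+1+(e+1) = b+1+d+1+e+1 by omega] at ih1
      rw [show b+1+d+1+e+1 = b+d+e+3 by omega, show b+1+d+1+e = b+d+e+2 by omega,
        show (d:ℕ)+1+e+1+(b+1) = b+d+e+3 by omega, show (d:ℕ)+1+e+(b+1) = b+d+e+2 by omega,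
        show (e:ℕ)+1+(b+1+d)+1 = b+d+e+3 by omega, show (e:ℕ)+(b+1+d)+1 = b+d+e+2 by omega]
      rw [show b+1+d+1+e+1 = b+d+e+3 by omega] at ih1
      rw [show b+1+d+1+e = b+d+e+2 by omega] at ih0
      linear_combination ih1 - (x (b+d+e+2) * x (b+d+e+3)) * ih0


lemma AA_split (n : ℕ) (x : ℕ → ℂ) (m : ℕ) :
    AA (tr (n+2) x) (m+1) = AA (tr (n+1) x) (m+1) + x n * x (n+1) * AA (tr n x) m := by
  have hy1 : ∀ j, n+1 ≤ j → tr (n+1) x j = 0 := fun j hj => tr_ge hj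
  have hy0 : ∀ j, n ≤ j → tr n x j = 0 := fun j hj => tr_ge hj
  have hsum2 : Summable (fun k : Fin (m+1) → ℕ =>
      if k (Fin.last m) = n then x n * x (n+1) * Fterm (tr n x) m (Fin.init k) else 0) := by
    apply summable_of_ne_finset_zero
      (s := Fintype.piFinset fun _ : Fin (m+1) => Finset.range (n+2))
    intro k hk
    by_contra h
    apply hk
    rw [Fintype.mem_piFinset]
    by_cases hl : k (Fin.last m) = n
    case neg => rw [if_neg hl] at h; exact absurd rfl h
    rw [if_pos hl] at h
    have hne : Fterm (tr n x) m (Fin.init k) ≠ 0 := fun hz => h (by rw [hz, mul_zero])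
    intro i
    rw [Finset.mem_range]
    induction i using Fin.lastCases with
    | last => omega
    | cast j =>
      have h2 : k (Fin.castSucc j) + 1 < n := Fterm_index_lt hy0 hne j
      omega
  rw [AA, tsum_congr (Fterm_split n x m),
    Summable.tsum_add (summable_Fterm hy1 (m+1)) hsum2]
  congr 1
  rw [AA, ← tsum_mul_left]
  refine tsum_eq_tsum_of_ne_zero_bij (fun k' => Fin.snoc k'.1 n) ?_ ?_ ?_
  · intro a b hab
    apply Subtype.ext
    have h2 := congrArg Fin.init hab
    rwa [Fin.init_snoc, Fin.init_snoc] at h2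
  · intro k hk
    rw [Function.mem_support] at hk
    by_cases hl : k (Fin.last m) = n
    · refine ⟨⟨Fin.init k, ?_⟩, ?_⟩
      · rw [Function.mem_support]
        intro hz
        exact hk (by rw [if_pos hl]; exact hz)
      · show Fin.snoc (Fin.init k) n = k
        rw [← hl]; exact Fin.snoc_init_self k
    · exact absurd (if_neg hl) hk
  · intro a
    simp [Fin.snoc_last, Fin.init_snoc]

lemma FFfin_rec (n : ℕ) (x : ℕ → ℂ) :
    FFfin (n+2) x = FFfin (n+1) x - x n * x (n+1) * FFfin n x := by
  have hy1 : ∀ j, n+1 ≤ j → tr (n+1) x j = 0 := fun j hj => tr_ge hj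
  have hy0 : ∀ j, n ≤ j → tr n x j = 0 := fun j hj => tr_ge hj
  have hS1 : Summable (fun m : ℕ => (-1:ℂ)^(m+1) * AA (tr (n+1) x) (m+1)) :=
    summable_outer hy1
  have hS2 : Summable (fun m : ℕ =>
      (-1:ℂ)^(m+1) * (x n * x (n+1) * AA (tr n x) m)) := by
    apply summable_of_ne_finset_zero (s := Finset.range (n+2))
    intro m hm
    rw [Finset.mem_range, not_lt] at hm
    cases m with
    | zero => omega
    | succ m' => rw [AA_eq_zero hy0 m' (by omega), mul_zero, mul_zero]
  have hsplit : ∀ m : ℕ, (-1:ℂ)^(m+1) * AA (tr (n+2) x) (m+1)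
      = (-1:ℂ)^(m+1) * AA (tr (n+1) x) (m+1)
        + (-1:ℂ)^(m+1) * (x n * x (n+1) * AA (tr n x) m) := by
    intro m; rw [AA_split]; ring
  rw [FFfin_def (n+2) x, FFfin_def (n+1) x, FFfin_def n x, FF_eq, FF_eq, FF_eq]
  rw [tsum_congr hsplit, Summable.tsum_add hS1 hS2]
  rw [Summable.tsum_eq_zero_add hS2]
  have e0 : (-1:ℂ)^(0+1) * (x n * x (n+1) * AA (tr n x) 0) = -(x n * x (n+1)) := by
    rw [AA_zero_eq_one]; ring
  have e1 : ∀ m : ℕ, (-1:ℂ)^(m+1+1) * (x n * x (n+1) * AA (tr n x) (m+1))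
      = (-(x n * x (n+1))) * ((-1:ℂ)^(m+1) * AA (tr n x) (m+1)) := by
    intro m; rw [pow_succ]; ring
  rw [e0, tsum_congr e1, tsum_mul_left]
  ring

lemma FFfin_le_one {n : ℕ} (hn : n ≤ 1) (x : ℕ → ℂ) : FFfin n x = 1 := by
  rw [FFfin_def, FF_eq]
  have h1 : ∀ m : ℕ, AA (tr n x) (m+1) = 0 := by
    intro m
    rw [AA]
    have h2 : ∀ k : Fin (m+1) → ℕ, Fterm (tr n x) (m+1) k = 0 := by
      intro k
      by_cases hc : Cond k
      · rw [Fterm_pos hc]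
        apply Finset.prod_eq_zero (Finset.mem_univ (0 : Fin (m+1)))
        rw [tr_ge (show n ≤ k 0 + 1 by omega), mul_zero]
      · exact Fterm_neg hc
    rw [tsum_congr h2, tsum_zero]
  have h3 : ∀ m : ℕ, (-1:ℂ)^(m+1) * AA (tr n x) (m+1) = 0 := fun m => by
    rw [h1, mul_zero]
  rw [tsum_congr h3, tsum_zero, add_zero]

lemma FFfin_eq_G (n : ℕ) (x : ℕ → ℂ) : FFfin n x = G n x := by
  induction n using Nat.twoStepInduction with
  | zero => rw [FFfin_le_one (by omega), G_zero]
  | one => rw [FFfin_le_one (by omega), G_one]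
  | more n ih1 ih2 => rw [FFfin_rec, G_rec, ih1, ih2]

theorem FF_finite_identity (p r ℓ : ℕ) (hp : 1 < p) (hpr : p ≤ r + 1) (hrl : r + 1 ≤ ℓ)
    (x : ℕ → ℂ) :
    FFfin r x * FFfin (ℓ + 1 - p) (fun k => x (k + (p - 1))) -
        FFfin ℓ x * FFfin (r + 1 - p) (fun k => x (k + (p - 1))) =
      (∏ j ∈ Finset.Icc (p - 1) r, x (j - 1) * x j) * FFfin (p - 2) x *
        FFfin (ℓ - r - 1) (fun k => x (k + r + 1)) := by
  obtain ⟨b, rfl⟩ : ∃ b, p = b + 2 := ⟨p - 2, by omega⟩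
  obtain ⟨d, rfl⟩ : ∃ d, r = b + 1 + d := ⟨r - (b+1), by omega⟩
  obtain ⟨e, rfl⟩ : ∃ e, ℓ = b + 1 + d + 1 + e := ⟨ℓ - (b+1+d+1), by omega⟩
  have h1 : b + 1 + d + 1 + e + 1 - (b+2) = d + 1 + e := by omega
  have h2 : b + 1 + d + 1 - (b+2) = d := by omega
  have h3 : b + 2 - 2 = b := by omega
  have h4 : b + 2 - 1 = b + 1 := by omega
  have h5 : b + 1 + d + 1 + e - (b+1+d) - 1 = e := by omega
  rw [h1, h2, h3, h4, h5]
  rw [FFfin_eq_G, FFfin_eq_G, FFfin_eq_G, FFfin_eq_G, FFfin_eq_G, FFfin_eq_G]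
  have hicc : (∏ j ∈ Finset.Icc (b+1) (b+1+d), x (j-1) * x j)
      = ∏ j ∈ Finset.range (d+1), x (b+j) * x (b+j+1) := by
    rw [← Finset.Ico_add_one_right_eq_Icc, Finset.prod_Ico_eq_prod_range]
    rw [show b+1+d+1-(b+1) = d+1 by omega]
    apply Finset.prod_congr rfl
    intro j _
    rw [show b+1+j-1 = b+j by omega, show b+1+j = b+j+1 by omega]
  rw [hicc]
  exact Gid e b d x
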